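/- Let λ ∈ (0,1), B > 0, C_0 > 0, C_2 > 0 and suppose p(i,j) ≤ C_0² u² + B C_2 λ^{j-i} u for all n^γ ≤ i < j ≤ n, where u = m(U_n) satisfies n·u → τ. If for each i the inner sum runs over j ≥ i + R_n with R_n → ∞, and each i contributes at most L_n = (n/k_n)(1+o(1)) terms with k_n → ∞, then Σ_{i=n^γ}^{n} Σ_{j≥i+R_n}^{i+L_n} p(i,j) → 0 as n → ∞. -/

import Mathlib

open Filter Topology

set_option maxHeartbeats 2000000 in
theorem stmt_10 (lam B C₀ C₂ τ γ : ℝ) (hlam0 : 0 < lam) (hlam1 : lam < 1)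
    (hB : 0 < B) (hC₀ : 0 < C₀) (hC₂ : 0 < C₂) (hγ0 : 0 < γ) (hγ1 : γ < 1)
    (p : ℕ → ℕ → ℝ) (hp0 : ∀ i j, 0 ≤ p i j)
    (u : ℕ → ℝ) (hu0 : ∀ n, 0 ≤ u n)
    (hu : Tendsto (fun n : ℕ => (n : ℝ) * u n) atTop (nhds τ))
    (hbound : ∀ n : ℕ, ∀ i j : ℕ, ((n : ℝ) ^ γ ≤ i) → i < j → j ≤ n →
      p i j ≤ C₀ ^ 2 * u n ^ 2 + B * C₂ * lam ^ (j - i) * u n)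
    (R : ℕ → ℕ) (hR : Tendsto R atTop atTop)
    (k : ℕ → ℕ) (hk : Tendsto k atTop atTop)
    (L : ℕ → ℕ)
    (hL : Tendsto (fun n : ℕ => (L n : ℝ) * (k n : ℝ) / (n : ℝ)) atTop (nhds 1)) :
    Tendsto (fun n : ℕ =>
        ∑ i ∈ Finset.Icc (⌈(n : ℝ) ^ γ⌉₊) n,
          ∑ j ∈ Finset.Icc (i + R n) (i + L n), p i j)
      atTop (nhds 0) := by
  set M : ℝ := |τ| + 1 with hMdef
  have hM : 0 < M := by positivity
  -- eventually n * u n ≤ M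
  have hevM : ∀ᶠ n : ℕ in atTop, (n : ℝ) * u n ≤ M :=
    hu.eventually_le_const (by nlinarith [le_abs_self τ])
  obtain ⟨N₀, hN₀⟩ := eventually_atTop.mp hevM
  -- L n / n → 0
  have hk1 : Tendsto (fun n : ℕ => 1 / (k n : ℝ)) atTop (nhds 0) :=
    tendsto_one_div_atTop_nhds_zero_nat.comp hk
  have hLn : Tendsto (fun n : ℕ => (L n : ℝ) / (n : ℝ)) atTop (nhds 0) := by
    have h := hL.mul hk1
    rw [one_mul] at h
    apply h.congr'
    filter_upwards [hk.eventually_ge_atTop 1] with n hkn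
    have hkne : (k n : ℝ) ≠ 0 := by positivity
    have h2 : (L n : ℝ) * (k n) / n * (1 / (k n)) = (L n : ℝ) * ((k n) * ((k n):ℝ)⁻¹) / n := by
      ring
    rw [h2, mul_inv_cancel₀ hkne, mul_one]
  -- (n+1)/n → 1
  have hn1 : Tendsto (fun n : ℕ => ((n : ℝ) + 1) / (n : ℝ)) atTop (nhds 1) := by
    have h := (tendsto_const_nhds : Tendsto (fun _ : ℕ => (1:ℝ)) atTop (nhds 1)).add
      tendsto_one_div_atTop_nhds_zero_nat
    rw [add_zero] at h
    apply h.congr'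
    filter_upwards [eventually_ge_atTop 1] with n hn
    have hne : (n : ℝ) ≠ 0 := by
      have : (0:ℕ) < n := hn
      positivity
    rw [add_div, div_self hne, one_div]
  -- lam ^ R n → 0
  have hlamR : Tendsto (fun n : ℕ => lam ^ (R n)) atTop (nhds 0) :=
    (tendsto_pow_atTop_nhds_zero_of_lt_one hlam0.le hlam1).comp hR
  -- the dominating sequence
  set g : ℕ → ℝ := fun n =>
    C₀ ^ 2 * M ^ 2 * (((n : ℝ) + 1) / (n : ℝ) * (((L n : ℝ) + 1) / (n : ℝ))) +
      B * C₂ * M / (1 - lam) * (((n : ℝ) + 1) / (n : ℝ) * lam ^ (R n)) with hgdef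
  have hg : Tendsto g atTop (nhds 0) := by
    have t1 : Tendsto (fun n : ℕ => ((n : ℝ) + 1) / (n : ℝ) * (((L n : ℝ) + 1) / (n : ℝ)))
        atTop (nhds 0) := by
      have h2 : Tendsto (fun n : ℕ => ((L n : ℝ) + 1) / (n : ℝ)) atTop (nhds 0) := by
        have := hLn.add tendsto_one_div_atTop_nhds_zero_nat
        rw [add_zero] at this
        apply this.congr fun n => by rw [← add_div]
      simpa using hn1.mul h2
    have t2 : Tendsto (fun n : ℕ => ((n : ℝ) + 1) / (n : ℝ) * lam ^ (R n)) atTop (nhds 0) := by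
      simpa using hn1.mul hlamR
    have := (tendsto_const_nhds (x := C₀ ^ 2 * M ^ 2)).mul t1 |>.add
      ((tendsto_const_nhds (x := B * C₂ * M / (1 - lam))).mul t2)
    simpa using this
  -- n ^ (γ - 1) → 0
  have hrp : Tendsto (fun n : ℕ => (n : ℝ) ^ (γ - 1)) atTop (nhds 0) := by
    have h := (tendsto_rpow_neg_atTop (y := 1 - γ) (by linarith)).comp
      tendsto_natCast_atTop_atTop (α := ℕ)
    have : -(1 - γ) = γ - 1 := by ring
    simpa [Function.comp_def, this] using h
  refine squeeze_zero' (Eventually.of_forall fun n =>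
    Finset.sum_nonneg fun i _ => Finset.sum_nonneg fun j _ => hp0 i j) ?_ hg
  filter_upwards [eventually_ge_atTop N₀, eventually_ge_atTop 1,
    hR.eventually_ge_atTop 1, hLn.eventually_le_const (show (0:ℝ) < 1/2 by norm_num),
    hrp.eventually_le_const (show (0:ℝ) < 1/8 by norm_num)] with n hnN hn1' hRn hLhalf hrp8
  have hnpos : (0 : ℝ) < n := by exact_mod_cast hn1'
  have hLn2 : 2 * (L n : ℝ) ≤ n := by
    rw [div_le_iff₀ hnpos] at hLhalf; linarith
  have hγn : 4 * (n : ℝ) ^ γ ≤ n := by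
    have hsplit := Real.rpow_add hnpos (γ - 1) 1
    rw [show γ - 1 + 1 = γ by ring, Real.rpow_one] at hsplit
    rw [hsplit]
    nlinarith [hrp8, hnpos]
  have hun : u n ≤ M / n := by
    rw [le_div_iff₀ hnpos]
    have := hN₀ n hnN
    linarith [this]
  have hA0 : (0:ℝ) ≤ C₀ ^ 2 * (M / (n:ℝ)) ^ 2 := by positivity
  have hc0 : (0:ℝ) ≤ B * C₂ * (M / (n:ℝ)) := by positivity
  -- pairwise bound
  have hpair : ∀ i ∈ Finset.Icc (⌈(n : ℝ) ^ γ⌉₊) n, ∀ j ∈ Finset.Icc (i + R n) (i + L n),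
      p i j ≤ C₀ ^ 2 * (M / (n:ℝ)) ^ 2 + B * C₂ * (M / (n:ℝ)) * lam ^ (j - i) := by
    intro i hi j hj
    rw [Finset.mem_Icc] at hi hj
    have hiγ : (n : ℝ) ^ γ ≤ i := Nat.ceil_le.mp hi.1
    have hij : i < j := by omega
    have key : ∃ m : ℕ, u m ≤ M / n ∧
        p i j ≤ C₀ ^ 2 * u m ^ 2 + B * C₂ * lam ^ (j - i) * u m := by
      by_cases hjn : j ≤ n
      · exact ⟨n, hun, hbound n i j hiγ hij hjn⟩
      · push_neg at hjn
        have hjpos : (0 : ℝ) < j := by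
          have : 0 < j := by omega
          exact_mod_cast this
        have hjr : (j : ℝ) ≤ 2 * n := by
          have h1 : (j : ℝ) ≤ (i : ℝ) + (L n : ℝ) := by exact_mod_cast hj.2
          have h2 : (i : ℝ) ≤ n := by exact_mod_cast hi.2
          linarith
        have hjγ : (j : ℝ) ^ γ ≤ i := by
          have h1 : (j : ℝ) ^ γ ≤ ((2 : ℝ) * n) ^ γ :=
            Real.rpow_le_rpow (by positivity) hjr hγ0.le
          have h2 : ((2 : ℝ) * n) ^ γ = (2 : ℝ) ^ γ * (n : ℝ) ^ γ :=
            Real.mul_rpow (by norm_num) (by positivity)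
          have h3 : (2 : ℝ) ^ γ ≤ 2 := by
            calc (2 : ℝ) ^ γ ≤ (2 : ℝ) ^ (1 : ℝ) :=
                  Real.rpow_le_rpow_of_exponent_le one_le_two hγ1.le
              _ = 2 := Real.rpow_one 2
          have hnγ0 : (0 : ℝ) ≤ (n : ℝ) ^ γ := by positivity
          have h4 : (j : ℝ) ^ γ ≤ 2 * (n : ℝ) ^ γ := by
            calc (j : ℝ) ^ γ ≤ (2 : ℝ) ^ γ * (n : ℝ) ^ γ := by rw [← h2]; exact h1
              _ ≤ 2 * (n : ℝ) ^ γ := by nlinarith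
          -- i ≥ n/2 since j > n and j ≤ i + L n with L n ≤ n/2
          have h5 : (n : ℝ) < (i : ℝ) + (L n : ℝ) := by
            have : (n : ℝ) < (j : ℝ) := by exact_mod_cast hjn
            have h1' : (j : ℝ) ≤ (i : ℝ) + (L n : ℝ) := by exact_mod_cast hj.2
            linarith
          linarith
        have hum : u j ≤ M / n := by
          have h1 : u j ≤ M / j := by
            rw [le_div_iff₀ hjpos]
            have := hN₀ j (le_trans hnN (le_of_lt hjn))
            linarith
          have h2 : M / (j : ℝ) ≤ M / n :=
            div_le_div_of_nonneg_left hM.le hnpos (by exact_mod_cast hjn.le)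
          linarith
        exact ⟨j, hum, hbound j i j hjγ hij le_rfl⟩
    obtain ⟨m, hum, hpb⟩ := key
    have hum0 := hu0 m
    have hl0 : (0 : ℝ) ≤ lam ^ (j - i) := by positivity
    calc p i j ≤ C₀ ^ 2 * u m ^ 2 + B * C₂ * lam ^ (j - i) * u m := hpb
      _ ≤ C₀ ^ 2 * (M / (n:ℝ)) ^ 2 + B * C₂ * (M / (n:ℝ)) * lam ^ (j - i) := by
          have h1 : u m ^ 2 ≤ (M / (n:ℝ)) ^ 2 := by nlinarith
          have h1' : C₀ ^ 2 * u m ^ 2 ≤ C₀ ^ 2 * (M / (n:ℝ)) ^ 2 :=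
            mul_le_mul_of_nonneg_left h1 (by positivity)
          have h2' : B * C₂ * lam ^ (j - i) * u m ≤ B * C₂ * (M / (n:ℝ)) * lam ^ (j - i) := by
            calc B * C₂ * lam ^ (j - i) * u m ≤ B * C₂ * lam ^ (j - i) * (M / (n:ℝ)) :=
                  mul_le_mul_of_nonneg_left hum (by positivity)
              _ = B * C₂ * (M / (n:ℝ)) * lam ^ (j - i) := by ring
          linarith
  -- per-i bound
  have hgeom : ∀ i : ℕ, ∑ j ∈ Finset.Icc (i + R n) (i + L n), lam ^ (j - i)
      ≤ lam ^ (R n) / (1 - lam) := by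
    intro i
    have hmap : Finset.Icc (i + R n) (i + L n)
        = (Finset.Icc (R n) (L n)).map (addLeftEmbedding i) := by
      rw [Finset.map_add_left_Icc]
    rw [hmap, Finset.sum_map]
    have : ∀ d ∈ Finset.Icc (R n) (L n), lam ^ ((addLeftEmbedding i d) - i) = lam ^ d := by
      intro d _
      simp [addLeftEmbedding_apply]
    rw [Finset.sum_congr rfl this, ← Finset.Ico_add_one_right_eq_Icc]
    exact geom_sum_Ico_le_of_lt_one hlam0.le hlam1
  have hper : ∀ i ∈ Finset.Icc (⌈(n : ℝ) ^ γ⌉₊) n,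
      ∑ j ∈ Finset.Icc (i + R n) (i + L n), p i j
        ≤ ((L n : ℝ) + 1) * (C₀ ^ 2 * (M / (n:ℝ)) ^ 2) + (B * C₂ * (M / (n:ℝ))) * (lam ^ (R n) / (1 - lam)) := by
    intro i hi
    calc ∑ j ∈ Finset.Icc (i + R n) (i + L n), p i j
        ≤ ∑ j ∈ Finset.Icc (i + R n) (i + L n), ((C₀ ^ 2 * (M / (n:ℝ)) ^ 2) + (B * C₂ * (M / (n:ℝ))) * lam ^ (j - i)) :=
          Finset.sum_le_sum (hpair i hi)
      _ = ((Finset.Icc (i + R n) (i + L n)).card : ℝ) * (C₀ ^ 2 * (M / (n:ℝ)) ^ 2)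
          + (B * C₂ * (M / (n:ℝ))) * ∑ j ∈ Finset.Icc (i + R n) (i + L n), lam ^ (j - i) := by
          rw [Finset.sum_add_distrib, Finset.sum_const, nsmul_eq_mul, Finset.mul_sum]
      _ ≤ ((L n : ℝ) + 1) * (C₀ ^ 2 * (M / (n:ℝ)) ^ 2) + (B * C₂ * (M / (n:ℝ))) * (lam ^ (R n) / (1 - lam)) := by
          refine add_le_add (mul_le_mul_of_nonneg_right ?_ hA0)
            (mul_le_mul_of_nonneg_left (hgeom i) hc0)
          rw [Nat.card_Icc]
          have : i + L n + 1 - (i + R n) ≤ L n + 1 := by omega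
          calc ((i + L n + 1 - (i + R n) : ℕ) : ℝ) ≤ ((L n + 1 : ℕ) : ℝ) := by
                exact_mod_cast this
            _ = (L n : ℝ) + 1 := by push_cast; ring
  have hP0 : 0 ≤ ((L n : ℝ) + 1) * (C₀ ^ 2 * (M / (n:ℝ)) ^ 2) + (B * C₂ * (M / (n:ℝ))) * (lam ^ (R n) / (1 - lam)) := by
    have : (0:ℝ) ≤ lam ^ (R n) / (1 - lam) := by
      apply div_nonneg (by positivity); linarith
    positivity
  calc ∑ i ∈ Finset.Icc (⌈(n : ℝ) ^ γ⌉₊) n, ∑ j ∈ Finset.Icc (i + R n) (i + L n), p i j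
      ≤ ∑ _i ∈ Finset.Icc (⌈(n : ℝ) ^ γ⌉₊) n,
          (((L n : ℝ) + 1) * (C₀ ^ 2 * (M / (n:ℝ)) ^ 2) + (B * C₂ * (M / (n:ℝ))) * (lam ^ (R n) / (1 - lam))) :=
        Finset.sum_le_sum hper
    _ = ((Finset.Icc (⌈(n : ℝ) ^ γ⌉₊) n).card : ℝ)
        * (((L n : ℝ) + 1) * (C₀ ^ 2 * (M / (n:ℝ)) ^ 2) + (B * C₂ * (M / (n:ℝ))) * (lam ^ (R n) / (1 - lam))) := by
        rw [Finset.sum_const, nsmul_eq_mul]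
    _ ≤ ((n : ℝ) + 1) * (((L n : ℝ) + 1) * (C₀ ^ 2 * (M / (n:ℝ)) ^ 2) + (B * C₂ * (M / (n:ℝ))) * (lam ^ (R n) / (1 - lam))) := by
        refine mul_le_mul_of_nonneg_right ?_ hP0
        rw [Nat.card_Icc]
        have : n + 1 - ⌈(n : ℝ) ^ γ⌉₊ ≤ n + 1 := by omega
        calc ((n + 1 - ⌈(n : ℝ) ^ γ⌉₊ : ℕ) : ℝ) ≤ ((n + 1 : ℕ) : ℝ) := by exact_mod_cast this
          _ = (n : ℝ) + 1 := by push_cast; ring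
    _ = g n := by rw [hgdef]; ring
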